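/- The second-order cone Kₘ = {(z₀, ẑ) ∈ ℝ × ℝ^{m−1} : z₀ ≥ ‖ẑ‖} is facially exposed: for every face F of Kₘ there exists η ∈ Kₘ° (the polar cone) such that F = Kₘ ∩ {η}⊥. -/

import Mathlib

open scoped RealInnerProductSpace

/-- The norm of the "hat part" `ẑ` of `z = (z₀, ẑ) ∈ ℝ × ℝ^{m-1}`. -/
noncomputable def hatNorm {m : ℕ} (z : EuclideanSpace ℝ (Fin m)) : ℝ :=
  Real.sqrt (∑ i : Fin m, if (i : ℕ) = 0 then 0 else z i ^ 2)

/-- The second-order cone `Kₘ = {(z₀, ẑ) : z₀ ≥ ‖ẑ‖}`. -/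
def SOC (m : ℕ) [NeZero m] : Set (EuclideanSpace ℝ (Fin m)) :=
  {z | hatNorm z ≤ z 0}

/-- `F` is a face of the convex cone `C`. -/
def IsFace {E : Type*} [AddCommGroup E] [Module ℝ E] (C F : Set E) : Prop :=
  F.Nonempty ∧ F ⊆ C ∧ Convex ℝ F ∧
    ∀ y ∈ F, ∀ z ∈ C, ∀ w ∈ C, ∀ α : ℝ, 0 < α → α < 1 →
      y = α • z + (1 - α) • w → z ∈ F ∧ w ∈ F

section aux
variable {m : ℕ} [NeZero m]

/-- Projection killing the 0th coordinate. -/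
noncomputable def hatP (m : ℕ) : EuclideanSpace ℝ (Fin m) →ₗ[ℝ] EuclideanSpace ℝ (Fin m) where
  toFun z := WithLp.toLp 2 (fun i : Fin m => if (i : ℕ) = 0 then 0 else z i)
  map_add' x y := by ext i; by_cases h : (i : ℕ) = 0 <;> simp [h]
  map_smul' c x := by ext i; by_cases h : (i : ℕ) = 0 <;> simp [h]

lemma hatP_apply (z : EuclideanSpace ℝ (Fin m)) (i : Fin m) :
    hatP m z i = if (i : ℕ) = 0 then 0 else z i := rfl

lemma hatNorm_eq (z : EuclideanSpace ℝ (Fin m)) : hatNorm z = ‖hatP m z‖ := by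
  rw [EuclideanSpace.norm_eq, hatNorm]
  congr 1
  refine Finset.sum_congr rfl fun i _ => ?_
  by_cases h : (i : ℕ) = 0 <;> simp [hatP_apply, h, Real.norm_eq_abs, sq_abs]

lemma mem_SOC_iff (z : EuclideanSpace ℝ (Fin m)) : z ∈ SOC m ↔ ‖hatP m z‖ ≤ z 0 := by
  rw [SOC, Set.mem_setOf_eq, hatNorm_eq]

lemma inner_hatP (x z : EuclideanSpace ℝ (Fin m)) :
    ⟪(hatP m x : EuclideanSpace ℝ (Fin m)), z⟫ = ⟪hatP m x, hatP m z⟫ := by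
  simp only [PiLp.inner_apply, RCLike.inner_apply, conj_trivial]
  refine Finset.sum_congr rfl fun i _ => ?_
  by_cases h : (i : ℕ) = 0 <;> simp [hatP_apply, h]

lemma smul_apply0 (t : ℝ) (z : EuclideanSpace ℝ (Fin m)) (i : Fin m) : (t • z) i = t * z i := rfl

lemma zero_mem_SOC : (0 : EuclideanSpace ℝ (Fin m)) ∈ SOC m := by
  rw [mem_SOC_iff]; simp

lemma smul_mem_SOC {t : ℝ} (ht : 0 ≤ t) {z : EuclideanSpace ℝ (Fin m)} (hz : z ∈ SOC m) :
    t • z ∈ SOC m := by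
  rw [mem_SOC_iff] at *
  rw [map_smul, norm_smul, Real.norm_eq_abs, abs_of_nonneg ht, smul_apply0]
  exact mul_le_mul_of_nonneg_left hz ht

lemma zero_mem_face {F : Set (EuclideanSpace ℝ (Fin m))} (hF : IsFace (SOC m) F) :
    (0 : EuclideanSpace ℝ (Fin m)) ∈ F := by
  obtain ⟨⟨x, hx⟩, hFK, _, hface⟩ := hF
  have h2x : (2 : ℝ) • x ∈ SOC m := smul_mem_SOC (by norm_num) (hFK hx)
  refine (hface x hx 0 zero_mem_SOC ((2:ℝ) • x) h2x (1/2) (by norm_num) (by norm_num) ?_).1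
  rw [smul_zero, zero_add, smul_smul]
  norm_num

lemma smul_mem_face {F : Set (EuclideanSpace ℝ (Fin m))} (hF : IsFace (SOC m) F)
    {x : EuclideanSpace ℝ (Fin m)} (hx : x ∈ F) {t : ℝ} (ht : 0 < t) : t • x ∈ F := by
  obtain ⟨-, hFK, -, hface⟩ := hF
  have hxK := hFK hx
  rcases lt_trichotomy t 1 with h | h | h
  · have h2 : (0:ℝ) < 2 - t := by linarith
    refine (hface x hx (t • x) (smul_mem_SOC ht.le hxK) ((2:ℝ) • x)
      (smul_mem_SOC (by norm_num) hxK) (1/(2-t)) (by positivity) ?_ ?_).1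
    · rw [div_lt_one h2]; linarith
    · rw [smul_smul, smul_smul, ← add_smul]
      have : 1 / (2 - t) * t + (1 - 1 / (2 - t)) * 2 = 1 := by field_simp; ring
      rw [this, one_smul]
  · rw [h, one_smul]; exact hx
  · refine (hface x hx (t • x) (smul_mem_SOC ht.le hxK) 0 zero_mem_SOC (1/t)
      (by positivity) (by rw [div_lt_one ht]; exact h) ?_).1
    rw [smul_zero, add_zero, smul_smul, one_div, inv_mul_cancel₀ ht.ne', one_smul]

end aux

/-- The second-order cone is facially exposed: every face `F` of `Kₘ` is of the form
`F = Kₘ ∩ {η}⊥` for some `η` in the polar cone `Kₘ°`. -/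
theorem stmt10 (m : ℕ) [NeZero m] (hm : 2 ≤ m) (F : Set (EuclideanSpace ℝ (Fin m)))
    (hF : IsFace (SOC m) F) :
    ∃ η : EuclideanSpace ℝ (Fin m), (∀ y ∈ SOC m, ⟪η, y⟫ ≤ 0) ∧
      F = SOC m ∩ {z | ⟪η, z⟫ = 0} := by
  have hFK := hF.2.1
  by_cases hint : ∃ y ∈ F, ‖hatP m y‖ < y 0
  · -- F contains an interior point, so F = SOC m; take η = 0.
    refine ⟨0, by simp, ?_⟩
    ext z
    constructor
    · intro hz
      exact ⟨hFK hz, inner_zero_left z⟩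
    · rintro ⟨hz, -⟩
      obtain ⟨y, hyF, hy⟩ := hint
      set D := ‖hatP m z‖ + z 0 with hD
      have hzK := (mem_SOC_iff z).1 hz
      have hD0 : 0 ≤ D := add_nonneg (norm_nonneg _) (le_trans (norm_nonneg _) hzK)
      set ε := y 0 - ‖hatP m y‖ with hε'
      have hε : 0 < ε := sub_pos.2 hy
      set α := min (1/2) (ε / (D + 1)) with hα
      have hα0 : 0 < α := lt_min (by norm_num) (div_pos hε (by linarith))
      have hα1 : α < 1 := lt_of_le_of_lt (min_le_left _ _) (by norm_num)
      have hαD : α * D ≤ ε := by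
        calc α * D ≤ ε / (D + 1) * D := mul_le_mul_of_nonneg_right (min_le_right _ _) hD0
          _ ≤ ε / (D + 1) * (D + 1) :=
            mul_le_mul_of_nonneg_left (by linarith) (le_of_lt (div_pos hε (by linarith)))
          _ = ε := div_mul_cancel₀ _ (by linarith)
      have hw : (1 - α)⁻¹ • (y - α • z) ∈ SOC m := by
        refine smul_mem_SOC (inv_nonneg.2 (by linarith)) ?_
        rw [mem_SOC_iff]
        have h1 : (y - α • z) 0 = y 0 - α * z 0 := rfl
        rw [map_sub, map_smul, h1]
        calc ‖hatP m y - α • hatP m z‖ ≤ ‖hatP m y‖ + ‖α • hatP m z‖ := norm_sub_le _ _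
          _ = ‖hatP m y‖ + α * ‖hatP m z‖ := by
              rw [norm_smul, Real.norm_eq_abs, abs_of_pos hα0]
          _ ≤ y 0 - α * z 0 := by nlinarith
      refine (hF.2.2.2 y hyF z hz _ hw α hα0 hα1 ?_).1
      rw [smul_smul, mul_inv_cancel₀ (by linarith : (1:ℝ) - α ≠ 0), one_smul]
      module
  · push_neg at hint
    have hbd : ∀ y ∈ F, ‖hatP m y‖ = y 0 := fun y hy =>
      le_antisymm ((mem_SOC_iff y).1 (hFK hy)) (hint y hy)
    by_cases hnz : ∃ x ∈ F, x ≠ 0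
    · obtain ⟨x, hxF, hxne⟩ := hnz
      have hxK := hFK hxF
      have hxK' := (mem_SOC_iff x).1 hxK
      have hnx : ‖hatP m x‖ = x 0 := hbd x hxF
      have hx0 : 0 < x 0 := by
        rcases (le_trans (norm_nonneg (hatP m x)) hxK').lt_or_eq with h | h
        · exact h
        · exfalso
          apply hxne
          have hn : hatP m x = 0 := by
            rw [← norm_eq_zero]
            exact le_antisymm (h ▸ hxK') (norm_nonneg _)
          ext i
          by_cases hi : (i : ℕ) = 0
          · have hi' : i = 0 := Fin.ext (by simpa using hi)
            rw [hi']; exact h.symm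
          · have := congrFun (congrArg (fun v : EuclideanSpace ℝ (Fin m) => (v : Fin m → ℝ)) hn) i
            simpa [hatP_apply, hi] using this
      set η := hatP m x - (x 0) • EuclideanSpace.single (0 : Fin m) (1 : ℝ) with hηdef
      have hinner : ∀ z : EuclideanSpace ℝ (Fin m),
          ⟪η, z⟫ = ⟪hatP m x, hatP m z⟫ - x 0 * z 0 := by
        intro z
        rw [hηdef, inner_sub_left, inner_hatP, real_inner_smul_left,
          EuclideanSpace.inner_single_left]
        ring_nf
        simp
      refine ⟨η, ?_, ?_⟩
      · intro y hy
        rw [hinner]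
        have h1 : ⟪hatP m x, hatP m y⟫ ≤ ‖hatP m x‖ * ‖hatP m y‖ := real_inner_le_norm _ _
        have h2 := (mem_SOC_iff y).1 hy
        nlinarith [norm_nonneg (hatP m y)]
      · ext z
        constructor
        · intro hzF
          have hzK := hFK hzF
          refine ⟨hzK, ?_⟩
          show ⟪η, z⟫ = 0
          rw [hinner]
          have hmid : ((1:ℝ)/2) • x + ((1:ℝ)/2) • z ∈ F :=
            hF.2.2.1 hxF hzF (by norm_num) (by norm_num) (by norm_num)
          have hmb := hbd _ hmid
          have hz0 := hbd z hzF
          have hadd : ‖hatP m x + hatP m z‖ = ‖hatP m x‖ + ‖hatP m z‖ := by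
            have h1 : hatP m (((1:ℝ)/2) • x + ((1:ℝ)/2) • z)
                = ((1:ℝ)/2) • (hatP m x + hatP m z) := by
              rw [map_add, map_smul, map_smul, smul_add]
            have h2 : (((1:ℝ)/2) • x + ((1:ℝ)/2) • z) 0 = (1/2) * x 0 + (1/2) * z 0 := rfl
            rw [h1, h2, norm_smul, Real.norm_eq_abs] at hmb
            rw [abs_of_pos (by norm_num : (0:ℝ) < 1/2)] at hmb
            linarith
          have hip : ⟪hatP m x, hatP m z⟫ = ‖hatP m x‖ * ‖hatP m z‖ := by
            have hsq : ‖hatP m x + hatP m z‖ ^ 2 = (‖hatP m x‖ + ‖hatP m z‖) ^ 2 := by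
              rw [hadd]
            rw [norm_add_sq_real] at hsq
            nlinarith [hsq]
          rw [hip, hnx, hz0]
          ring
        · rintro ⟨hzK, hperp⟩
          have hzb := (mem_SOC_iff z).1 hzK
          have hperp' : ⟪η, z⟫ = 0 := hperp
          have hip : ⟪hatP m x, hatP m z⟫ = x 0 * z 0 := by
            have h := hinner z
            linarith [h, hperp']
          have hcs : ⟪hatP m x, hatP m z⟫ ≤ ‖hatP m x‖ * ‖hatP m z‖ := real_inner_le_norm _ _
          have hz0 : ‖hatP m z‖ = z 0 := by
            refine le_antisymm hzb ?_
            have hle : x 0 * z 0 ≤ x 0 * ‖hatP m z‖ := by rw [hnx] at hcs; linarith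
            exact le_of_mul_le_mul_left hle hx0
          have heqcs : ⟪hatP m x, hatP m z⟫ = ‖hatP m x‖ * ‖hatP m z‖ := by
            rw [hnx, hz0]; exact hip
          have hdep := inner_eq_norm_mul_iff_real.1 heqcs
          rw [hz0, hnx] at hdep
          have hz00 : 0 ≤ z 0 := le_trans (norm_nonneg _) hzb
          have hzeq : z = (z 0 / x 0) • x := by
            ext i
            by_cases hi : (i : ℕ) = 0
            · have hi' : i = 0 := Fin.ext (by simpa using hi)
              rw [hi']
              show z 0 = (z 0 / x 0) * x 0
              field_simp
            · have hco := congrFun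
                (congrArg (fun v : EuclideanSpace ℝ (Fin m) => (v : Fin m → ℝ)) hdep) i
              simp only [smul_apply0, hatP_apply, hi, if_false] at hco
              show z i = (z 0 / x 0) * x i
              field_simp
              nlinarith [hco]
          rcases eq_or_lt_of_le hz00 with h0 | h0
          · have hz' : z = 0 := by rw [hzeq, ← h0]; simp
            rw [hz']
            exact zero_mem_face hF
          · rw [hzeq]
            exact smul_mem_face hF hxF (div_pos h0 hx0)
    · -- F = {0}
      push_neg at hnz
      have hF0 : F = {0} := Set.eq_singleton_iff_unique_mem.2 ⟨zero_mem_face hF, hnz⟩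
      refine ⟨-(EuclideanSpace.single (0 : Fin m) (1 : ℝ)), ?_, ?_⟩
      · intro y hy
        have h := (mem_SOC_iff y).1 hy
        have h0 : (0:ℝ) ≤ y 0 := le_trans (norm_nonneg _) h
        rw [inner_neg_left, EuclideanSpace.inner_single_left]
        simpa using h0
      · rw [hF0]
        ext z
        simp only [Set.mem_singleton_iff, Set.mem_inter_iff, Set.mem_setOf_eq,
          inner_neg_left, EuclideanSpace.inner_single_left, conj_trivial, one_mul,
          neg_eq_zero]
        constructor
        · rintro rfl
          exact ⟨zero_mem_SOC, by simp⟩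
        · rintro ⟨hz, hz0⟩
          have hzK := (mem_SOC_iff z).1 hz
          have hn : hatP m z = 0 := by
            rw [← norm_eq_zero]
            exact le_antisymm (hz0 ▸ hzK) (norm_nonneg _)
          ext i
          by_cases hi : (i : ℕ) = 0
          · have hi' : i = 0 := Fin.ext (by simpa using hi)
            rw [hi']; exact hz0
          · have := congrFun (congrArg (fun v : EuclideanSpace ℝ (Fin m) => (v : Fin m → ℝ)) hn) i
            simpa [hatP_apply, hi] using this
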